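/- Let N ≥ 4 be an integer, Δθ = 2π/N, and let indices i be taken modulo N. Fix T̃ > 0 and constants M ≥ 1, H > 0, C_h ≥ 0. Let h : ℝ → ℝ satisfy 0 < h(θ) ≤ H for all θ. Let W : ℝ × [0,T̃] → ℝ be such that θ ↦ W(θ,t) is 2π-periodic and four times differentiable with |∂_θ^j W(θ,t)| ≤ M for j = 0,1,2,3,4 and all (θ,t), W is differentiable in t, and W satisfies W_t(θ,t) = h(θ)·(W(θ,t)²·W_θθ(θ,t) + W(θ,t)³). Let h_i be constants with 0 < h_i ≤ H and |h_i - h(iΔθ)| ≤ C_h·(Δθ)², and let ω : [0,T̃] → (ZMod N → ℝ) be differentiable with |ω_i(t)| ≤ M, satisfying ω̇_i = h_i·[ω_i²·(ω_{i+1} - 2ω_i + ω_{i-1})/(2·(1 - cos Δθ)) + ω_i³]. Then there exist constants b ≥ 0 and C ≥ 0, depending only on M, H, and C_h (and not on N, W, ω, or t), such that for all t ∈ [0,T̃]: max_{0 ≤ i ≤ N-1} |W(iΔθ,t) - ω_i(t)| ≤ (max_{0 ≤ i ≤ N-1} |W(iΔθ,0) - ω_i(0)|)·e^{b·t} + C·(Δθ)²·t·e^{b·t}.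 -/

import Mathlib

open Real

open Set Filter

private lemma aux_mul_abs_le {u v U V : ℝ} (h1 : |u| ≤ U) (h2 : |v| ≤ V) : |u * v| ≤ U * V := by
  rw [abs_mul]
  exact mul_le_mul h1 h2 (abs_nonneg _) ((abs_nonneg u).trans h1)

private lemma aux_nonpos {f f' : ℝ → ℝ} (hd : ∀ x, HasDerivAt f (f' x) x)
    (h0 : f 0 ≤ 0) (h' : ∀ x, 0 ≤ x → f' x ≤ 0) : ∀ x, 0 ≤ x → f x ≤ 0 := by
  intro x hx
  have hmono : AntitoneOn f (Set.Ici 0) := by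
    apply antitoneOn_of_deriv_nonpos (convex_Ici 0)
    · exact fun y _ => (hd y).differentiableAt.continuousAt.continuousWithinAt
    · exact fun y _ => (hd y).differentiableAt.differentiableWithinAt
    · intro y hy
      rw [interior_Ici] at hy
      rw [(hd y).deriv]
      exact h' y hy.le
  exact (hmono (self_mem_Ici) hx hx).trans h0

private lemma aux_cos_ub {x : ℝ} (hx : 0 ≤ x) : Real.cos x ≤ 1 - x^2/2 + x^4/24 := by
  have hq' : ∀ y : ℝ, HasDerivAt (fun y : ℝ => -Real.sin y + y - y^3/6)
      (-Real.cos y + 1 - y^2/2) y := by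
    intro y
    have := (((Real.hasDerivAt_sin y).neg.add (hasDerivAt_id y)).sub
      ((hasDerivAt_pow 3 y).div_const 6))
    refine this.congr_deriv ?_
    simp
    ring
  have h1 : ∀ y : ℝ, 0 ≤ y → -Real.sin y + y - y^3/6 ≤ 0 := by
    apply aux_nonpos hq'
    · simp
    · intro y _
      have := Real.one_sub_sq_div_two_le_cos (x := y)
      linarith
  have hq : ∀ y : ℝ, HasDerivAt (fun y : ℝ => Real.cos y - 1 + y^2/2 - y^4/24)
      (-Real.sin y + y - y^3/6) y := by
    intro y
    have := (((Real.hasDerivAt_cos y).sub_const 1).add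
      ((hasDerivAt_pow 2 y).div_const 2)).sub ((hasDerivAt_pow 4 y).div_const 24)
    refine this.congr_deriv ?_
    simp
    ring
  have := aux_nonpos hq (by simp) h1 x hx
  linarith

private lemma aux_comp {g g' B B' : ℝ → ℝ} {A : ℝ}
    (hg : ∀ x, HasDerivAt g (g' x) x) (hB : ∀ x, HasDerivAt B (B' x) x)
    (h0 : |g 0| ≤ B 0) (hbd : ∀ x ∈ Set.Icc (0:ℝ) A, |g' x| ≤ B' x) :
    ∀ x ∈ Set.Icc (0:ℝ) A, |g x| ≤ B x := by
  intro x hx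
  have := image_norm_le_of_norm_deriv_right_le_deriv_boundary (f := g) (f' := g') (a := 0) (b := A)
    (fun y _ => (hg y).continuousAt.continuousWithinAt)
    (fun y _ => (hg y).hasDerivWithinAt)
    (by simpa using h0) hB
    (fun y hy => by simpa using hbd y ⟨hy.1, hy.2.le⟩)
  simpa using this hx

private lemma aux_secdiff {V : ℝ → ℝ} {M : ℝ} (hV : ContDiff ℝ 4 V)
    (hb : ∀ j ≤ 4, ∀ θ : ℝ, |iteratedDeriv j V θ| ≤ M) (θ : ℝ) {s : ℝ} (hs : 0 ≤ s) :
    |V (θ + s) + V (θ - s) - 2 * V θ - s ^ 2 * iteratedDeriv 2 V θ| ≤ M * s ^ 4 / 12 := by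
  have hdiff : ∀ j : ℕ, j < 4 → Differentiable ℝ (iteratedDeriv j V) := by
    intro j hj
    exact hV.differentiable_iteratedDeriv j (by exact_mod_cast hj)
  have hD : ∀ j : ℕ, j < 4 → ∀ x : ℝ, HasDerivAt (iteratedDeriv j V)
      (iteratedDeriv (j+1) V x) x := by
    intro j hj x
    rw [iteratedDeriv_succ]
    exact ((hdiff j hj) x).hasDerivAt
  -- Lipschitz bound for third derivative
  have hLip : ∀ a b : ℝ, |iteratedDeriv 3 V a - iteratedDeriv 3 V b| ≤ M * |a - b| := by
    intro a b
    have := Convex.norm_image_sub_le_of_norm_deriv_le (𝕜 := ℝ) (f := iteratedDeriv 3 V) (s := Set.univ)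
      (fun x _ => (hdiff 3 (by norm_num) x))
      (fun x _ => by
        rw [← iteratedDeriv_succ]
        simpa using hb 4 (le_refl _) x)
      convex_univ (Set.mem_univ b) (Set.mem_univ a)
    simpa using this
  -- derivatives of shifted functions
  have hplus : ∀ j : ℕ, j < 4 → ∀ x : ℝ, HasDerivAt (fun y => iteratedDeriv j V (θ + y))
      (iteratedDeriv (j+1) V (θ + x)) x := by
    intro j hj x
    have := (hD j hj (θ + x)).comp x ((hasDerivAt_id x).const_add θ)
    simpa [Function.comp_def] using this
  have hminus : ∀ j : ℕ, j < 4 → ∀ x : ℝ, HasDerivAt (fun y => iteratedDeriv j V (θ - y))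
      (-(iteratedDeriv (j+1) V (θ - x))) x := by
    intro j hj x
    have := (hD j hj (θ - x)).comp x ((hasDerivAt_id x).const_sub θ)
    simpa [Function.comp_def] using this
  have hM0 : 0 ≤ M := (abs_nonneg _).trans (hb 0 (by norm_num) 0)
  -- g2 bound
  have hg2d : ∀ x : ℝ, HasDerivAt
      (fun y => iteratedDeriv 2 V (θ + y) + iteratedDeriv 2 V (θ - y) - 2 * iteratedDeriv 2 V θ)
      (iteratedDeriv 3 V (θ + x) - iteratedDeriv 3 V (θ - x)) x := by
    intro x
    have := ((hplus 2 (by norm_num) x).add (hminus 2 (by norm_num) x)).sub_const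
      (2 * iteratedDeriv 2 V θ)
    exact this.congr_deriv (by ring)
  have hg2 : ∀ x ∈ Set.Icc (0:ℝ) s,
      |iteratedDeriv 2 V (θ + x) + iteratedDeriv 2 V (θ - x) - 2 * iteratedDeriv 2 V θ|
        ≤ M * x ^ 2 := by
    refine aux_comp (B' := fun x => 2 * M * x) hg2d
      (fun x => ((hasDerivAt_pow 2 x).const_mul M).congr_deriv (by push_cast; ring)) ?_ ?_
    · simp [two_mul]
    · intro x hx
      have := hLip (θ + x) (θ - x)
      have habs : |(θ + x) - (θ - x)| = 2 * x := by
        rw [show (θ + x) - (θ - x) = 2 * x by ring, abs_of_nonneg (by linarith [hx.1])]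
      rw [habs] at this
      linarith
  -- g1 bound
  have hg1d : ∀ x : ℝ, HasDerivAt
      (fun y => iteratedDeriv 1 V (θ + y) - iteratedDeriv 1 V (θ - y) - 2 * y * iteratedDeriv 2 V θ)
      (iteratedDeriv 2 V (θ + x) + iteratedDeriv 2 V (θ - x) - 2 * iteratedDeriv 2 V θ) x := by
    intro x
    have h3 : HasDerivAt (fun y : ℝ => 2 * y * iteratedDeriv 2 V θ) (2 * iteratedDeriv 2 V θ) x := by
      have := ((hasDerivAt_id x).const_mul (2:ℝ)).mul_const (iteratedDeriv 2 V θ)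
      simpa using this
    have := ((hplus 1 (by norm_num) x).sub (hminus 1 (by norm_num) x)).sub h3
    exact this.congr_deriv (by ring)
  have hg1 : ∀ x ∈ Set.Icc (0:ℝ) s,
      |iteratedDeriv 1 V (θ + x) - iteratedDeriv 1 V (θ - x) - 2 * x * iteratedDeriv 2 V θ|
        ≤ M * x ^ 3 / 3 := by
    refine aux_comp (B' := fun x => M * x ^ 2) hg1d
      (fun x => (((hasDerivAt_pow 3 x).const_mul M).div_const 3).congr_deriv
        (by push_cast; ring)) ?_ ?_
    · simp
    · intro x hx
      exact hg2 x hx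
  -- g0 bound
  have hg0d : ∀ x : ℝ, HasDerivAt
      (fun y => V (θ + y) + V (θ - y) - 2 * V θ - y ^ 2 * iteratedDeriv 2 V θ)
      (iteratedDeriv 1 V (θ + x) - iteratedDeriv 1 V (θ - x) - 2 * x * iteratedDeriv 2 V θ) x := by
    intro x
    have h3 : HasDerivAt (fun y : ℝ => y ^ 2 * iteratedDeriv 2 V θ)
        (2 * x * iteratedDeriv 2 V θ) x := by
      have := (hasDerivAt_pow 2 x).mul_const (iteratedDeriv 2 V θ)
      exact this.congr_deriv (by ring)
    have h0p : HasDerivAt (fun y => V (θ + y)) (iteratedDeriv 1 V (θ + x)) x := by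
      have := hplus 0 (by norm_num) x
      simpa [iteratedDeriv_zero] using this
    have h0m : HasDerivAt (fun y => V (θ - y)) (-(iteratedDeriv 1 V (θ - x))) x := by
      have := hminus 0 (by norm_num) x
      simpa [iteratedDeriv_zero] using this
    have := ((h0p.add h0m).sub_const (2 * V θ)).sub h3
    exact this.congr_deriv (by ring)
  have hg0 : ∀ x ∈ Set.Icc (0:ℝ) s,
      |V (θ + x) + V (θ - x) - 2 * V θ - x ^ 2 * iteratedDeriv 2 V θ| ≤ M * x ^ 4 / 12 := by
    refine aux_comp (B' := fun x => M * x ^ 3 / 3) hg0d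
      (fun x => (((hasDerivAt_pow 4 x).const_mul M).div_const 12).congr_deriv
        (by push_cast; ring)) ?_ ?_
    · simp [two_mul]
    · intro x hx
      exact hg1 x hx
  exact hg0 s ⟨hs, le_refl _⟩

set_option maxHeartbeats 1000000 in
private lemma aux_main_est {M H Ch Δθ c F a hdi Wi W2 Wp Wm ωi ωp ωm ep em σ : ℝ}
    (hM : 1 ≤ M) (hH : 0 < H) (hCh : 0 ≤ Ch)
    (hΔpos : 0 < Δθ) (hΔ2 : Δθ^2 ≤ 5/2)
    (hcub : c ≤ Δθ^2) (hclb : Δθ^2 - Δθ^4/12 ≤ c) (hchalf : Δθ^2/2 ≤ c)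
    (ha0 : 0 < a) (haH : a ≤ H) (hd0 : 0 < hdi) (hdH : hdi ≤ H)
    (hdC : |hdi - a| ≤ Ch * Δθ^2)
    (hWi : |Wi| ≤ M) (hW2 : |W2| ≤ M) (hωi : |ωi| ≤ M)
    (hsec : |Wp + Wm - 2*Wi - Δθ^2 * W2| ≤ M * Δθ^4 / 12)
    (hσ : σ = 1 ∨ σ = -1)
    (hσe : σ * (Wi - ωi) = F)
    (hepF : |ep| ≤ F) (hemF : |em| ≤ F)
    (hωp : ωp = Wp - ep) (hωm : ωm = Wm - em) :
    σ * (a * (Wi^2 * W2 + Wi^3) - hdi * (ωi^2 * (ωp - 2*ωi + ωm) / c + ωi^3))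
      ≤ 7*H*M^2 * F + (H*M^3 + 3*Ch*M^3) * Δθ^2 := by
  have hσa : |σ| = 1 := by rcases hσ with h | h <;> rw [h] <;> norm_num
  have hM0 : (0:ℝ) ≤ M := by linarith
  have hF0 : 0 ≤ F := (abs_nonneg ep).trans hepF
  have heiF : |Wi - ωi| = F := by
    have : |σ * (Wi - ωi)| = |F| := by rw [hσe]
    rwa [abs_mul, hσa, one_mul, abs_of_nonneg hF0] at this
  have hcpos : 0 < c := lt_of_lt_of_le (by positivity) hchalf
  have hcne : c ≠ 0 := ne_of_gt hcpos
  have haabs : |a| ≤ H := by rw [abs_of_pos ha0]; exact haH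
  have hdabs : |hdi| ≤ H := by rw [abs_of_pos hd0]; exact hdH
  have hWi2 : |Wi^2| ≤ M^2 := by rw [abs_pow]; exact pow_le_pow_left₀ (abs_nonneg _) hWi 2
  have hWi3 : |Wi^3| ≤ M^3 := by rw [abs_pow]; exact pow_le_pow_left₀ (abs_nonneg _) hWi 3
  have hωi2 : |ωi^2| ≤ M^2 := by rw [abs_pow]; exact pow_le_pow_left₀ (abs_nonneg _) hωi 2
  have hdC' : |a - hdi| ≤ Ch * Δθ^2 := by rwa [abs_sub_comm] at hdC
  set S : ℝ := Wp - 2*Wi + Wm with hSdef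
  have h1 : |S - c*W2| ≤ M * Δθ^4 / 6 := by
    have e1 : S - c*W2 = (Wp + Wm - 2*Wi - Δθ^2*W2) + (Δθ^2 - c)*W2 := by rw [hSdef]; ring
    rw [e1]
    refine (abs_add_le _ _).trans ?_
    have h2 : |(Δθ^2 - c)*W2| ≤ (Δθ^4/12) * M :=
      aux_mul_abs_le (abs_le.mpr ⟨by linarith, by linarith⟩) hW2
    linarith
  have hQW : |W2 - S/c| ≤ M * Δθ^2 / 3 := by
    have e2 : W2 - S/c = -((S - c*W2)/c) := by field_simp; ring
    rw [e2, abs_neg, abs_div, abs_of_pos hcpos, div_le_iff₀ hcpos]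
    nlinarith [mul_le_mul_of_nonneg_left hchalf (by positivity : (0:ℝ) ≤ M * Δθ^2 / 3)]
  have hQb : |S/c| ≤ 2*M := by
    have h4 := abs_sub_abs_le_abs_sub (S/c) W2
    have h5 : |S/c - W2| ≤ M * Δθ^2/3 := by rwa [abs_sub_comm] at hQW
    have h6 : M*Δθ^2 ≤ M*(5/2) := mul_le_mul_of_nonneg_left hΔ2 hM0
    nlinarith [h4, h5, hW2, h6, hM0]
  have hdec : σ * (a * (Wi^2 * W2 + Wi^3) - hdi * (ωi^2 * (ωp - 2*ωi + ωm) / c + ωi^3))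
      = σ*a*Wi^2*(W2 - S/c) + σ*(a*Wi^2 - hdi*ωi^2)*(S/c)
        + (hdi*ωi^2/c)*(σ*ep - 2*(σ*(Wi - ωi)) + σ*em)
        + σ*(a - hdi)*Wi^3 + σ*hdi*(Wi^3 - ωi^3) := by
    rw [hωp, hωm, hSdef]
    field_simp
    ring
  have hB1 : σ*a*Wi^2*(W2 - S/c) ≤ H*M^3*Δθ^2/3 := by
    refine (le_abs_self _).trans ?_
    refine (aux_mul_abs_le (aux_mul_abs_le (aux_mul_abs_le (le_of_eq hσa) haabs) hWi2) hQW).trans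
      (le_of_eq (by ring))
  have hin : |a*Wi^2 - hdi*ωi^2| ≤ Ch*Δθ^2*M^2 + H*(F*(2*M)) := by
    have e4 : a*Wi^2 - hdi*ωi^2 = (a - hdi)*Wi^2 + hdi*((Wi-ωi)*(Wi+ωi)) := by ring
    rw [e4]
    refine (abs_add_le _ _).trans ?_
    have h5 : |(a - hdi)*Wi^2| ≤ Ch*Δθ^2*M^2 := aux_mul_abs_le hdC' hWi2
    have h6 : |hdi*((Wi-ωi)*(Wi+ωi))| ≤ H*(F*(2*M)) :=
      aux_mul_abs_le hdabs (aux_mul_abs_le (le_of_eq heiF) ((abs_add_le _ _).trans (by linarith)))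
    linarith
  have hB2 : σ*(a*Wi^2 - hdi*ωi^2)*(S/c) ≤ 2*Ch*M^3*Δθ^2 + 4*H*M^2*F := by
    refine (le_abs_self _).trans ?_
    refine (aux_mul_abs_le (aux_mul_abs_le (le_of_eq hσa) hin) hQb).trans (le_of_eq (by ring))
  have hB3 : (hdi*ωi^2/c)*(σ*ep - 2*(σ*(Wi - ωi)) + σ*em) ≤ 0 := by
    apply mul_nonpos_of_nonneg_of_nonpos
    · positivity
    · have h7 : σ*ep ≤ F := (le_abs_self _).trans (by rwa [abs_mul, hσa, one_mul])
      have h8 : σ*em ≤ F := (le_abs_self _).trans (by rwa [abs_mul, hσa, one_mul])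
      rw [hσe]
      linarith
  have hB4 : σ*(a - hdi)*Wi^3 ≤ Ch*M^3*Δθ^2 := by
    refine (le_abs_self _).trans ?_
    refine (aux_mul_abs_le (aux_mul_abs_le (le_of_eq hσa) hdC') hWi3).trans (le_of_eq (by ring))
  have hB5 : σ*hdi*(Wi^3 - ωi^3) ≤ 3*H*M^2*F := by
    refine (le_abs_self _).trans ?_
    have e5 : Wi^3 - ωi^3 = (Wi - ωi)*(Wi^2 + Wi*ωi + ωi^2) := by ring
    have habs3 : |Wi^2 + Wi*ωi + ωi^2| ≤ 3*M^2 := by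
      refine (abs_add_le _ _).trans ?_
      have := (abs_add_le (Wi^2) (Wi*ωi)).trans (add_le_add hWi2 (aux_mul_abs_le hWi hωi))
      nlinarith [hωi2]
    have h9 : |Wi^3 - ωi^3| ≤ F*(3*M^2) := by
      rw [e5]; exact aux_mul_abs_le (le_of_eq heiF) habs3
    refine (aux_mul_abs_le (aux_mul_abs_le (le_of_eq hσa) hdabs) h9).trans (le_of_eq (by ring))
  have hHM3 : (0:ℝ) ≤ H*M^3*Δθ^2 := by positivity
  linarith [hdec, hB1, hB2, hB3, hB4, hB5]

set_option maxHeartbeats 1000000 in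
/-- Second-order accuracy of the crystalline algorithm: if the smooth weighted
curvature `W` solves `W_t = h (W² W_θθ + W³)` with bounds `M`, `H`, and the
crystalline curvatures `ωᵢ` solve the discrete system with coefficients `hdᵢ`
approximating `h(iΔθ)` to order `(Δθ)²`, then there are constants `b, C ≥ 0`
depending only on `M`, `H`, `C_h` such that
`maxᵢ |W(iΔθ, t) - ωᵢ(t)| ≤ (maxᵢ |W(iΔθ, 0) - ωᵢ(0)|) e^{bt} + C (Δθ)² t e^{bt}`. -/
theorem stmt15 (M H Ch : ℝ) (hM : 1 ≤ M) (hH : 0 < H) (hCh : 0 ≤ Ch) :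
    ∃ b C : ℝ, 0 ≤ b ∧ 0 ≤ C ∧
      ∀ (N : ℕ) [NeZero N], 4 ≤ N →
      ∀ Δθ : ℝ, Δθ = 2 * π / N →
      ∀ T : ℝ, 0 < T →
      ∀ h : ℝ → ℝ, (∀ θ, 0 < h θ ∧ h θ ≤ H) →
      ∀ W Wt : ℝ → ℝ → ℝ,
        (∀ θ t, W (θ + 2 * π) t = W θ t) →
        (∀ t ∈ Set.Icc (0:ℝ) T, ContDiff ℝ 4 (fun θ => W θ t)) →
        (∀ t ∈ Set.Icc (0:ℝ) T, ∀ j ≤ 4, ∀ θ : ℝ,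
          |iteratedDeriv j (fun θ' => W θ' t) θ| ≤ M) →
        (∀ θ : ℝ, ∀ t ∈ Set.Icc (0:ℝ) T,
          HasDerivWithinAt (fun s => W θ s) (Wt θ t) (Set.Icc 0 T) t) →
        (∀ θ : ℝ, ∀ t ∈ Set.Icc (0:ℝ) T,
          Wt θ t = h θ * ((W θ t) ^ 2 * iteratedDeriv 2 (fun θ' => W θ' t) θ
            + (W θ t) ^ 3)) →
      ∀ hd : ZMod N → ℝ,
        (∀ i : ZMod N, 0 < hd i ∧ hd i ≤ H ∧
          |hd i - h ((i.val : ℝ) * Δθ)| ≤ Ch * Δθ ^ 2) →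
      ∀ ω : ℝ → ZMod N → ℝ,
        (∀ t ∈ Set.Icc (0:ℝ) T, ∀ i : ZMod N, |ω t i| ≤ M) →
        (∀ t ∈ Set.Icc (0:ℝ) T, ∀ i : ZMod N,
          HasDerivWithinAt (fun s => ω s i)
            (hd i * ((ω t i) ^ 2 * (ω t (i + 1) - 2 * ω t i + ω t (i - 1))
                / (2 * (1 - Real.cos Δθ)) + (ω t i) ^ 3))
            (Set.Icc 0 T) t) →
      ∀ t ∈ Set.Icc (0:ℝ) T,
        Finset.univ.sup' Finset.univ_nonempty
            (fun i : ZMod N => |W ((i.val : ℝ) * Δθ) t - ω t i|) ≤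
          Finset.univ.sup' Finset.univ_nonempty
              (fun i : ZMod N => |W ((i.val : ℝ) * Δθ) 0 - ω 0 i|)
            * Real.exp (b * t)
          + C * Δθ ^ 2 * t * Real.exp (b * t) := by
  have hπ := Real.pi_pos
  have hπ315 : π < 3.15 := Real.pi_lt_d2
  refine ⟨7*H*M^2, H*M^3 + 3*Ch*M^3, by positivity, by positivity, ?_⟩
  intro N instN hN4 Δθ hΔθ T hT h hh W Wt hper hCD hbd hWt heq hd hhd ω hωbd hωode t ht
  haveI : Fact (1 < N) := ⟨by omega⟩
  have hM0 : (0:ℝ) ≤ M := by linarith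
  have hNR : (4:ℝ) ≤ (N:ℝ) := by exact_mod_cast hN4
  have hNpos : (0:ℝ) < N := by linarith
  have hΔpos : 0 < Δθ := by rw [hΔθ]; positivity
  have hNΔ : (N:ℝ) * Δθ = 2*π := by rw [hΔθ]; field_simp
  have hΔle : Δθ ≤ π/2 := by
    rw [hΔθ, div_le_div_iff₀ hNpos (by norm_num : (0:ℝ) < 2)]
    nlinarith
  have hΔ2 : Δθ^2 ≤ 5/2 := by nlinarith
  have hcub : 2*(1 - Real.cos Δθ) ≤ Δθ^2 := by
    have := Real.one_sub_sq_div_two_le_cos (x := Δθ)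
    linarith
  have hclb : Δθ^2 - Δθ^4/12 ≤ 2*(1 - Real.cos Δθ) := by
    have := aux_cos_ub hΔpos.le
    linarith
  have hchalf : Δθ^2/2 ≤ 2*(1 - Real.cos Δθ) := by nlinarith
  -- periodicity identities for neighbouring indices
  have hp : ∀ (j : ZMod N) (s : ℝ),
      W (((j+1).val : ℝ) * Δθ) s = W ((j.val : ℝ)*Δθ + Δθ) s := by
    intro j s
    have hvadd : (j + 1).val = (j.val + 1) % N := by
      rw [ZMod.val_add, ZMod.val_one]
    rcases lt_or_eq_of_le (Nat.succ_le_of_lt j.val_lt) with hlt | heqN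
    · rw [hvadd, Nat.mod_eq_of_lt hlt]
      congr 1
      push_cast
      ring
    · have hjn : j.val + 1 = N := by omega
      have h0 : (j + 1).val = 0 := by rw [hvadd, hjn, Nat.mod_self]
      have hjv : (j.val : ℝ) = (N : ℝ) - 1 := by
        have h' : ((j.val : ℕ) : ℝ) + 1 = ((N : ℕ) : ℝ) := by exact_mod_cast hjn
        linarith
      have harg : (j.val:ℝ)*Δθ + Δθ = 0 + 2*π := by
        rw [hjv]; linarith [hNΔ]
      rw [h0, harg, hper 0 s]
      norm_num
  have hm : ∀ (i : ZMod N) (s : ℝ),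
      W (((i-1).val : ℝ) * Δθ) s = W ((i.val : ℝ)*Δθ - Δθ) s := by
    intro i s
    by_cases h0 : i.val = 0
    · have hi0 : i = 0 := (ZMod.val_eq_zero i).mp h0
      obtain ⟨m, rfl⟩ : ∃ m, N = m + 1 := ⟨N - 1, by omega⟩
      have hv : ((0 - 1 : ZMod (m+1))).val = m := by
        rw [zero_sub]; exact ZMod.val_neg_one m
      have hmR : ((m:ℝ) + 1) * Δθ = 2 * π := by exact_mod_cast hNΔ
      rw [hi0, hv]
      have harg : (m : ℝ) * Δθ = ((0 : ZMod (m+1)).val : ℝ) * Δθ - Δθ + 2 * π := by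
        simp only [ZMod.val_zero, Nat.cast_zero, zero_mul]
        linarith
      rw [harg, hper]
    · have h1le : 1 ≤ i.val := Nat.one_le_iff_ne_zero.mpr h0
      have hvlt := i.val_lt
      have hcast : ((i.val - 1 : ℕ) : ZMod N) = i - 1 := by
        rw [Nat.cast_sub h1le, ZMod.natCast_rightInverse i, Nat.cast_one]
      have hv : (i - 1).val = i.val - 1 := by
        rw [← hcast, ZMod.val_cast_of_lt (by omega)]
      rw [hv]
      congr 1
      push_cast [Nat.cast_sub h1le]
      ring
  -- the discrete sup function
  set F : ℝ → ℝ := fun s => Finset.univ.sup' Finset.univ_nonempty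
      (fun i : ZMod N => |W ((i.val : ℝ) * Δθ) s - ω s i|) with hFdef
  have hFge : ∀ (s : ℝ) (j : ZMod N), |W ((j.val : ℝ) * Δθ) s - ω s j| ≤ F s := by
    intro s j
    rw [hFdef]
    exact Finset.le_sup' (fun i : ZMod N => |W ((i.val : ℝ) * Δθ) s - ω s i|) (Finset.mem_univ j)
  have hF0 : ∀ s, 0 ≤ F s := fun s => (abs_nonneg _).trans (hFge s 0)
  -- derivative of the differences
  have hd' : ∀ (i : ZMod N), ∀ x ∈ Set.Icc (0:ℝ) T,
      HasDerivWithinAt (fun s => W ((i.val : ℝ) * Δθ) s - ω s i)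
        (Wt ((i.val : ℝ) * Δθ) x - hd i * ((ω x i)^2 * (ω x (i+1) - 2*ω x i + ω x (i-1))
          / (2 * (1 - Real.cos Δθ)) + (ω x i)^3)) (Set.Icc 0 T) x :=
    fun i x hx => (hWt _ x hx).sub (hωode x hx i)
  have hcont : ∀ i : ZMod N, ContinuousOn (fun s => W ((i.val : ℝ) * Δθ) s - ω s i)
      (Set.Icc (0:ℝ) T) := fun i x hx => (hd' i x hx).continuousWithinAt
  have hFcont : ContinuousOn F (Set.Icc (0:ℝ) T) := by
    rw [hFdef]
    exact ContinuousOn.finset_sup'_apply Finset.univ_nonempty (fun i _ => (hcont i).abs)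
  -- key one-sided estimate at argmax indices
  have hkey : ∀ x ∈ Set.Ico (0:ℝ) T, ∀ i : ZMod N, ∀ σ : ℝ, σ = 1 ∨ σ = -1 →
      σ * (W ((i.val : ℝ) * Δθ) x - ω x i) = F x →
      σ * (Wt ((i.val : ℝ) * Δθ) x - hd i * ((ω x i)^2 * (ω x (i+1) - 2*ω x i + ω x (i-1))
          / (2 * (1 - Real.cos Δθ)) + (ω x i)^3))
        ≤ 7*H*M^2 * F x + (H*M^3 + 3*Ch*M^3) * Δθ^2 := by
    intro x hx i σ hσ hσe
    have hxI : x ∈ Set.Icc (0:ℝ) T := ⟨hx.1, hx.2.le⟩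
    have hWi : |W ((i.val : ℝ) * Δθ) x| ≤ M := by
      have := hbd x hxI 0 (by norm_num) ((i.val : ℝ) * Δθ)
      simpa [iteratedDeriv_zero] using this
    have hW2 : |iteratedDeriv 2 (fun θ' => W θ' x) ((i.val : ℝ) * Δθ)| ≤ M :=
      hbd x hxI 2 (by norm_num) _
    have hωi : |ω x i| ≤ M := hωbd x hxI i
    obtain ⟨ha0, haH⟩ := hh ((i.val : ℝ) * Δθ)
    obtain ⟨hd0, hdH, hdC⟩ := hhd i
    have hsec : |W ((i.val : ℝ) * Δθ + Δθ) x + W ((i.val : ℝ) * Δθ - Δθ) x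
        - 2 * W ((i.val : ℝ) * Δθ) x
        - Δθ^2 * iteratedDeriv 2 (fun θ' => W θ' x) ((i.val : ℝ) * Δθ)| ≤ M * Δθ^4 / 12 :=
      aux_secdiff (hCD x hxI) (hbd x hxI) ((i.val : ℝ) * Δθ) hΔpos.le
    have hωp : ω x (i+1) = W ((i.val : ℝ) * Δθ + Δθ) x
        - (W (((i+1).val : ℝ) * Δθ) x - ω x (i+1)) := by
      rw [← hp i x]; ring
    have hωm : ω x (i-1) = W ((i.val : ℝ) * Δθ - Δθ) x
        - (W (((i-1).val : ℝ) * Δθ) x - ω x (i-1)) := by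
      rw [← hm i x]; ring
    rw [heq _ x hxI]
    exact aux_main_est hM hH hCh hΔpos hΔ2 hcub hclb hchalf ha0 haH hd0 hdH hdC
      hWi hW2 hωi hsec hσ hσe (hFge x (i+1)) (hFge x (i-1)) hωp hωm
  -- the Dini-type slope condition for the sup function
  have hfrk : ∀ x ∈ Set.Ico (0:ℝ) T, ∀ r : ℝ,
      7*H*M^2 * F x + (H*M^3 + 3*Ch*M^3) * Δθ^2 < r →
      ∃ᶠ z in nhdsWithin x (Set.Ioi x), (z - x)⁻¹ * (F z - F x) < r := by
    intro x hx r hr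
    have hxI : x ∈ Set.Icc (0:ℝ) T := ⟨hx.1, hx.2.le⟩
    have hr0 : 0 < r := lt_of_le_of_lt
      (add_nonneg (mul_nonneg (by positivity) (hF0 x)) (by positivity)) hr
    have hmem : Set.Icc (0:ℝ) T ∈ nhdsWithin x (Set.Ioi x) := by
      have h1 : Set.Ioo x T ∈ nhdsWithin x (Set.Ioi x) := Ioo_mem_nhdsGT_of_mem ⟨le_refl x, hx.2⟩
      exact Filter.mem_of_superset h1 (fun z hz => ⟨le_trans hx.1 hz.1.le, hz.2.le⟩)
    have hτ : ∀ (i : ZMod N) (τ : ℝ), τ = 1 ∨ τ = -1 →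
        ∀ᶠ z in nhdsWithin x (Set.Ioi x),
          (z - x)⁻¹ * (τ * (W ((i.val : ℝ) * Δθ) z - ω z i) - F x) < r := by
      intro i τ hτs
      have hτa : |τ| = 1 := by rcases hτs with h' | h' <;> rw [h'] <;> norm_num
      have hle : τ * (W ((i.val : ℝ) * Δθ) x - ω x i) ≤ F x :=
        (le_abs_self _).trans (by rw [abs_mul, hτa, one_mul]; exact hFge x i)
      rcases lt_or_eq_of_le hle with hlt | heq'
      · -- strictly below the max : slope is eventually negative
        have htend : Filter.Tendsto (fun z => τ * (W ((i.val : ℝ) * Δθ) z - ω z i) - F x)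
            (nhdsWithin x (Set.Ioi x)) (nhds (τ * (W ((i.val : ℝ) * Δθ) x - ω x i) - F x)) := by
          refine (((hcont i x hxI).mono_left (nhdsWithin_le_of_mem hmem)).const_mul τ).sub_const _
        have hev := htend.eventually_lt_const (by linarith : τ * (W ((i.val : ℝ) * Δθ) x - ω x i) - F x < 0)
        filter_upwards [hev, self_mem_nhdsWithin] with z h1 h2
        have hzx : 0 < z - x := sub_pos.mpr h2
        have : (z - x)⁻¹ * (τ * (W ((i.val : ℝ) * Δθ) z - ω z i) - F x) < 0 :=
          mul_neg_of_pos_of_neg (inv_pos.mpr hzx) h1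
        linarith
      · -- argmax : use the key estimate
        have hder : HasDerivWithinAt (fun s => W ((i.val : ℝ) * Δθ) s - ω s i)
            (Wt ((i.val : ℝ) * Δθ) x - hd i * ((ω x i)^2 * (ω x (i+1) - 2*ω x i + ω x (i-1))
              / (2 * (1 - Real.cos Δθ)) + (ω x i)^3)) (Set.Ioi x) x :=
          (hd' i x hxI).mono_of_mem_nhdsWithin hmem
        have hslope := (hasDerivWithinAt_iff_tendsto_slope' (notMem_Ioi.mpr (le_refl x))).mp hder
        have hkey' := hkey x hx i τ hτs heq'
        have hev := (hslope.const_mul τ).eventually_lt_const (lt_of_le_of_lt hkey' hr)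
        filter_upwards [hev, self_mem_nhdsWithin] with z h1 h2
        have hzx : x < z := h2
        have hne : z - x ≠ 0 := sub_ne_zero.mpr (ne_of_gt hzx)
        have hkeyz : (z - x)⁻¹ * (τ * (W ((i.val : ℝ) * Δθ) z - ω z i) - F x)
            = τ * slope (fun s => W ((i.val : ℝ) * Δθ) s - ω s i) x z := by
          rw [slope_def_field, ← heq']
          field_simp
        rw [hkeyz]
        exact h1
    have hall : ∀ᶠ z in nhdsWithin x (Set.Ioi x), ∀ i ∈ (Finset.univ : Finset (ZMod N)),
        (z - x)⁻¹ * (|W ((i.val : ℝ) * Δθ) z - ω z i| - F x) < r := by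
      rw [Filter.eventually_all_finset]
      intro i _
      filter_upwards [hτ i 1 (Or.inl rfl), hτ i (-1) (Or.inr rfl)] with z h1 h2
      rcases abs_cases (W ((i.val : ℝ) * Δθ) z - ω z i) with ⟨hv, _⟩ | ⟨hv, _⟩
      · rw [hv]; simpa using h1
      · rw [hv]; simpa using h2
    refine (Filter.Eventually.frequently ?_)
    filter_upwards [hall] with z hz
    obtain ⟨i0, -, hi0⟩ := Finset.exists_mem_eq_sup' (Finset.univ_nonempty)
      (fun i : ZMod N => |W ((i.val : ℝ) * Δθ) z - ω z i|)
    have hFz : F z = |W ((i0.val : ℝ) * Δθ) z - ω z i0| := by rw [hFdef]; exact hi0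
    rw [hFz]
    exact hz i0 (Finset.mem_univ i0)
  -- Grönwall
  have hgron := le_gronwallBound_of_liminf_deriv_right_le (a := 0) (b := T) (f := F)
    (f' := fun x => 7*H*M^2 * F x + (H*M^3 + 3*Ch*M^3) * Δθ^2)
    (δ := F 0) (K := 7*H*M^2) (ε := (H*M^3 + 3*Ch*M^3) * Δθ^2)
    hFcont hfrk (le_refl _) (fun x _ => le_refl _) t ht
  rw [sub_zero] at hgron
  have hK : (0:ℝ) < 7*H*M^2 := by positivity
  rw [gronwallBound_of_K_ne_0 (ne_of_gt hK)] at hgron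
  have ht0 : 0 ≤ t := ht.1
  set K : ℝ := 7*H*M^2 with hKdef
  set ε : ℝ := (H*M^3 + 3*Ch*M^3) * Δθ^2 with hεdef
  have hε0 : 0 ≤ ε := by rw [hεdef]; positivity
  have hexp : Real.exp (K*t) - 1 ≤ K*t*Real.exp (K*t) := by
    have h1 : -(K*t) + 1 ≤ Real.exp (-(K*t)) := Real.add_one_le_exp _
    have h2 : Real.exp (-(K*t)) * Real.exp (K*t) = 1 := by
      rw [← Real.exp_add]; simp
    nlinarith [Real.exp_pos (K*t)]
  have hεK : ε / K * (Real.exp (K*t) - 1) ≤ ε * t * Real.exp (K*t) := by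
    have h3 : ε / K * (Real.exp (K*t) - 1) ≤ ε / K * (K*t*Real.exp (K*t)) :=
      mul_le_mul_of_nonneg_left hexp (by positivity)
    have h4 : ε / K * (K*t*Real.exp (K*t)) = ε * t * Real.exp (K*t) := by
      field_simp
    linarith
  have hfinal : F t ≤ F 0 * Real.exp (K * t) + ε * t * Real.exp (K * t) := by linarith
  rw [hFdef] at hfinal
  exact hfinal
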